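/- Let (a,b) be a perplex parameter, n ≥ 1, and let c₀, c₁, …, cₙ ∈ ℝ² with cₙ ≠ 0. Define the polynomial function f(x) := cₙ * x^n + ⋯ + c₂ * x² + c₁ * x + c₀, where x^k is the k-fold *-power. Then f is ℙ_{a,b}-differentiable at every x ∈ ℝ² with derivative f'(x) = n·cₙ * x^{n−1} + ⋯ + 2·c₂ * x + c₁. -/

import Mathlib

open Filter Topology

noncomputable section

/-- The perplex product on `ℝ²` determined by the parameters `a = (a₁,a₂,a₃)`,
`b = (b₁,b₂,b₃)`. -/
def pmul (a₁ a₂ a₃ b₁ b₂ b₃ : ℝ) (x y : ℝ × ℝ) : ℝ × ℝ :=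
  (a₁ * x.1 * y.1 + a₂ * (x.1 * y.2 + x.2 * y.1) + a₃ * x.2 * y.2,
   b₁ * x.1 * y.1 + b₂ * (x.1 * y.2 + x.2 * y.1) + b₃ * x.2 * y.2)

/-- `(a,b)` is a perplex parameter: conditions (i)-(iv). -/
def IsPerplexParam (a₁ a₂ a₃ b₁ b₂ b₃ : ℝ) : Prop :=
  a₁ * a₃ - a₂ ^ 2 ≠ 0 ∧ a₁ * b₂ - a₂ * b₁ ≠ 0 ∧
    a₂ * b₂ - a₃ * b₁ = 0 ∧ a₁ * a₃ - a₂ ^ 2 + a₂ * b₃ - a₃ * b₂ = 0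

/-- The multiplicative identity `𝟙` of the perplex algebra. -/
def pone (a₁ a₂ b₁ b₂ : ℝ) : ℝ × ℝ :=
  (1 / (a₁ * b₂ - a₂ * b₁)) • ((b₂, -b₁) : ℝ × ℝ)

/-- The perplex norm `N`. -/
def pN (a₁ a₂ a₃ b₁ b₂ b₃ : ℝ) (x : ℝ × ℝ) : ℝ :=
  (a₁ * b₂ - a₂ * b₁) * x.1 ^ 2 + (a₁ * b₃ - a₃ * b₁) * x.1 * x.2 -
    (a₁ * a₃ - a₂ ^ 2) * x.2 ^ 2

/-- The Euclidean norm on `ℝ²`. -/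
noncomputable def enorm2 (x : ℝ × ℝ) : ℝ := Real.sqrt (x.1 ^ 2 + x.2 ^ 2)

open Classical in
/-- The `*`-inverse of `x` (junk value `0` if `x` is not invertible). -/
noncomputable def pinv (a₁ a₂ a₃ b₁ b₂ b₃ : ℝ) (x : ℝ × ℝ) : ℝ × ℝ :=
  if h : ∃ y, pmul a₁ a₂ a₃ b₁ b₂ b₃ x y = pone a₁ a₂ b₁ b₂ then h.choose else 0

/-- `n`-fold `*`-power of `x`, with `x ^ 0 := 𝟙`. -/
def ppow (a₁ a₂ a₃ b₁ b₂ b₃ : ℝ) (x : ℝ × ℝ) : ℕ → ℝ × ℝ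
  | 0 => pone a₁ a₂ b₁ b₂
  | n + 1 => pmul a₁ a₂ a₃ b₁ b₂ b₃ x (ppow a₁ a₂ a₃ b₁ b₂ b₃ x n)

/-- A sequence of invertible elements converging to `0` that is positively
separated from the zero-divisor directions. -/
def PosSep (a₁ a₂ a₃ b₁ b₂ b₃ : ℝ) (h : ℕ → ℝ × ℝ) : Prop :=
  (∀ n, ∃ y, pmul a₁ a₂ a₃ b₁ b₂ b₃ (h n) y = pone a₁ a₂ b₁ b₂) ∧
    Tendsto h atTop (nhds 0) ∧
      ∃ c > 0, ∀ n, c ≤ |pN a₁ a₂ a₃ b₁ b₂ b₃ ((enorm2 (h n))⁻¹ • h n)|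

/-- `f` is `ℙ_{a,b}`-differentiable at `x` with derivative `L`: the difference
quotients along every positively separated sequence converge, on a whole
neighborhood of `x`, to a value depending continuously on the base point, with
value `L` at `x`. -/
def PDiffAt (a₁ a₂ a₃ b₁ b₂ b₃ : ℝ) (f : ℝ × ℝ → ℝ × ℝ) (L : ℝ × ℝ)
    (x : ℝ × ℝ) : Prop :=
  ∃ U ∈ nhds x, ∃ d : ℝ × ℝ → ℝ × ℝ, d x = L ∧ ContinuousOn d U ∧
    ∀ y ∈ U, ∀ h : ℕ → ℝ × ℝ, PosSep a₁ a₂ a₃ b₁ b₂ b₃ h →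
      Tendsto
        (fun n => pmul a₁ a₂ a₃ b₁ b₂ b₃ (f (y + h n) - f y)
          (pinv a₁ a₂ a₃ b₁ b₂ b₃ (h n)))
        atTop (nhds (d y))

section PerplexAux

variable (a₁ a₂ a₃ b₁ b₂ b₃ : ℝ)

lemma pmul_comm' (x y : ℝ × ℝ) :
    pmul a₁ a₂ a₃ b₁ b₂ b₃ x y = pmul a₁ a₂ a₃ b₁ b₂ b₃ y x := by
  simp only [pmul, Prod.mk.injEq]; constructor <;> ring

/-- Right multiplication as a linear map. -/
def pmulL (u : ℝ × ℝ) : (ℝ × ℝ) →ₗ[ℝ] (ℝ × ℝ) where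
  toFun := pmul a₁ a₂ a₃ b₁ b₂ b₃ u
  map_add' x y := by
    simp only [pmul, Prod.fst_add, Prod.snd_add, Prod.mk_add_mk, Prod.mk.injEq]
    constructor <;> ring
  map_smul' r x := by
    simp only [pmul, Prod.smul_fst, Prod.smul_snd, Prod.smul_mk, smul_eq_mul,
      RingHom.id_apply, Prod.mk.injEq]
    constructor <;> ring

@[simp] lemma pmulL_apply (u x : ℝ × ℝ) :
    pmulL a₁ a₂ a₃ b₁ b₂ b₃ u x = pmul a₁ a₂ a₃ b₁ b₂ b₃ u x := rfl

lemma pmul_add (u x y : ℝ × ℝ) :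
    pmul a₁ a₂ a₃ b₁ b₂ b₃ u (x + y)
      = pmul a₁ a₂ a₃ b₁ b₂ b₃ u x + pmul a₁ a₂ a₃ b₁ b₂ b₃ u y :=
  map_add (pmulL a₁ a₂ a₃ b₁ b₂ b₃ u) x y

lemma pmul_sub (u x y : ℝ × ℝ) :
    pmul a₁ a₂ a₃ b₁ b₂ b₃ u (x - y)
      = pmul a₁ a₂ a₃ b₁ b₂ b₃ u x - pmul a₁ a₂ a₃ b₁ b₂ b₃ u y :=
  map_sub (pmulL a₁ a₂ a₃ b₁ b₂ b₃ u) x y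

lemma pmul_smul (u : ℝ × ℝ) (r : ℝ) (x : ℝ × ℝ) :
    pmul a₁ a₂ a₃ b₁ b₂ b₃ u (r • x) = r • pmul a₁ a₂ a₃ b₁ b₂ b₃ u x :=
  map_smul (pmulL a₁ a₂ a₃ b₁ b₂ b₃ u) r x

lemma pmul_zero (u : ℝ × ℝ) : pmul a₁ a₂ a₃ b₁ b₂ b₃ u 0 = 0 :=
  map_zero (pmulL a₁ a₂ a₃ b₁ b₂ b₃ u)

lemma zero_pmul (u : ℝ × ℝ) : pmul a₁ a₂ a₃ b₁ b₂ b₃ 0 u = 0 := by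
  rw [pmul_comm', pmul_zero]

lemma pmul_add_left (x y u : ℝ × ℝ) :
    pmul a₁ a₂ a₃ b₁ b₂ b₃ (x + y) u
      = pmul a₁ a₂ a₃ b₁ b₂ b₃ x u + pmul a₁ a₂ a₃ b₁ b₂ b₃ y u := by
  rw [pmul_comm', pmul_add, pmul_comm' _ _ _ _ _ _ u x, pmul_comm' _ _ _ _ _ _ u y]

lemma pmul_sum {ι : Type*} (u : ℝ × ℝ) (s : Finset ι) (g : ι → ℝ × ℝ) :
    pmul a₁ a₂ a₃ b₁ b₂ b₃ u (∑ i ∈ s, g i)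
      = ∑ i ∈ s, pmul a₁ a₂ a₃ b₁ b₂ b₃ u (g i) :=
  map_sum (pmulL a₁ a₂ a₃ b₁ b₂ b₃ u) g s

lemma pmul_cont :
    Continuous (fun p : (ℝ × ℝ) × (ℝ × ℝ) => pmul a₁ a₂ a₃ b₁ b₂ b₃ p.1 p.2) := by
  unfold pmul; fun_prop

lemma ppow_cont (k : ℕ) : Continuous (fun x : ℝ × ℝ => ppow a₁ a₂ a₃ b₁ b₂ b₃ x k) := by
  induction k with
  | zero => exact continuous_const
  | succ k ih =>
    show Continuous fun x : ℝ × ℝ =>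
      pmul a₁ a₂ a₃ b₁ b₂ b₃ x (ppow a₁ a₂ a₃ b₁ b₂ b₃ x k)
    exact (pmul_cont a₁ a₂ a₃ b₁ b₂ b₃).comp (continuous_id.prodMk ih)

variable {a₁ a₂ a₃ b₁ b₂ b₃}

lemma key_id (hp : IsPerplexParam a₁ a₂ a₃ b₁ b₂ b₃) :
    b₂ ^ 2 - b₁ * b₃ - a₁ * b₂ + a₂ * b₁ = 0 := by
  obtain ⟨h1, h2, h3, h4⟩ := hp
  by_cases ha : a₃ = 0
  · have ha2 : a₂ ≠ 0 := by
      intro h; apply h1; rw [ha, h]; ring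
    have hb2 : b₂ = 0 := by
      have hz : a₂ * b₂ = 0 := by rw [ha] at h3; linarith
      exact (mul_eq_zero.mp hz).resolve_left ha2
    have hb3 : b₃ = a₂ := by
      have hz : a₂ * (b₃ - a₂) = 0 := by rw [ha] at h4; linear_combination h4
      have := (mul_eq_zero.mp hz).resolve_left ha2
      linarith [sub_eq_zero.mp this]
    rw [hb2, hb3]; ring
  · have hz : a₃ * (b₂ ^ 2 - b₁ * b₃ - a₁ * b₂ + a₂ * b₁) = 0 := by
      linear_combination (-b₂) * h4 + (b₃ - a₂) * h3
    exact (mul_eq_zero.mp hz).resolve_left ha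

lemma passoc (hp : IsPerplexParam a₁ a₂ a₃ b₁ b₂ b₃) (x y z : ℝ × ℝ) :
    pmul a₁ a₂ a₃ b₁ b₂ b₃ (pmul a₁ a₂ a₃ b₁ b₂ b₃ x y) z
      = pmul a₁ a₂ a₃ b₁ b₂ b₃ x (pmul a₁ a₂ a₃ b₁ b₂ b₃ y z) := by
  have hE := key_id hp
  obtain ⟨h1, h2, h3, h4⟩ := hp
  simp only [pmul, Prod.mk.injEq]
  constructor
  · linear_combination (x.2 * y.1 * z.1 - x.1 * y.1 * z.2) * h3 +
      (x.2 * y.2 * z.1 - x.1 * y.2 * z.2) * h4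
  · linear_combination (x.2 * y.1 * z.1 - x.1 * y.1 * z.2) * hE +
      (x.1 * y.2 * z.2 - x.2 * y.2 * z.1) * h3

lemma pmul_one (hp : IsPerplexParam a₁ a₂ a₃ b₁ b₂ b₃) (x : ℝ × ℝ) :
    pmul a₁ a₂ a₃ b₁ b₂ b₃ x (pone a₁ a₂ b₁ b₂) = x := by
  have hE := key_id hp
  obtain ⟨h1, h2, h3, h4⟩ := hp
  have h2' : (a₁ * b₂ - a₂ * b₁)⁻¹ * (a₁ * b₂ - a₂ * b₁) = 1 := inv_mul_cancel₀ h2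
  rw [← Prod.mk.eta (p := x)]
  simp only [pmul, pone, Prod.smul_mk, smul_eq_mul, Prod.mk.injEq]
  constructor
  · linear_combination x.1 * h2' + (a₁ * b₂ - a₂ * b₁)⁻¹ * x.2 * h3
  · linear_combination x.2 * h2' + (a₁ * b₂ - a₂ * b₁)⁻¹ * x.2 * hE

lemma one_pmul (hp : IsPerplexParam a₁ a₂ a₃ b₁ b₂ b₃) (x : ℝ × ℝ) :
    pmul a₁ a₂ a₃ b₁ b₂ b₃ (pone a₁ a₂ b₁ b₂) x = x := by
  rw [pmul_comm', pmul_one hp]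

lemma pmul_left_comm (hp : IsPerplexParam a₁ a₂ a₃ b₁ b₂ b₃) (u v w : ℝ × ℝ) :
    pmul a₁ a₂ a₃ b₁ b₂ b₃ u (pmul a₁ a₂ a₃ b₁ b₂ b₃ v w)
      = pmul a₁ a₂ a₃ b₁ b₂ b₃ v (pmul a₁ a₂ a₃ b₁ b₂ b₃ u w) := by
  rw [← passoc hp, pmul_comm' _ _ _ _ _ _ u v, passoc hp]

lemma pmul_right_comm (hp : IsPerplexParam a₁ a₂ a₃ b₁ b₂ b₃) (u v w : ℝ × ℝ) :
    pmul a₁ a₂ a₃ b₁ b₂ b₃ (pmul a₁ a₂ a₃ b₁ b₂ b₃ u v) w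
      = pmul a₁ a₂ a₃ b₁ b₂ b₃ (pmul a₁ a₂ a₃ b₁ b₂ b₃ u w) v := by
  rw [passoc hp, pmul_comm' _ _ _ _ _ _ v w, ← passoc hp]

lemma pinv_spec (hp : IsPerplexParam a₁ a₂ a₃ b₁ b₂ b₃) {x : ℝ × ℝ}
    (hx : ∃ y, pmul a₁ a₂ a₃ b₁ b₂ b₃ x y = pone a₁ a₂ b₁ b₂) :
    pmul a₁ a₂ a₃ b₁ b₂ b₃ x (pinv a₁ a₂ a₃ b₁ b₂ b₃ x) = pone a₁ a₂ b₁ b₂ := by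
  rw [pinv, dif_pos hx]
  exact hx.choose_spec

lemma ppow_expand (hp : IsPerplexParam a₁ a₂ a₃ b₁ b₂ b₃) (k : ℕ) :
    ∃ Q : (ℝ × ℝ) → (ℝ × ℝ) → ℝ × ℝ,
      Continuous (fun p : (ℝ × ℝ) × (ℝ × ℝ) => Q p.1 p.2) ∧
      ∀ y h : ℝ × ℝ,
        ppow a₁ a₂ a₃ b₁ b₂ b₃ (y + h) (k + 1)
          = ppow a₁ a₂ a₃ b₁ b₂ b₃ y (k + 1)
            + ((k + 1 : ℕ) : ℝ) • pmul a₁ a₂ a₃ b₁ b₂ b₃ h (ppow a₁ a₂ a₃ b₁ b₂ b₃ y k)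
            + pmul a₁ a₂ a₃ b₁ b₂ b₃ (pmul a₁ a₂ a₃ b₁ b₂ b₃ h h) (Q y h) := by
  induction k with
  | zero =>
    refine ⟨fun _ _ => 0, continuous_const, fun y h => ?_⟩
    show pmul a₁ a₂ a₃ b₁ b₂ b₃ (y + h) (pone a₁ a₂ b₁ b₂) = _
    rw [pmul_one hp, pmul_zero]
    show y + h = pmul a₁ a₂ a₃ b₁ b₂ b₃ y (pone a₁ a₂ b₁ b₂)
      + ((1 : ℕ) : ℝ) • pmul a₁ a₂ a₃ b₁ b₂ b₃ h (pone a₁ a₂ b₁ b₂) + 0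
    rw [pmul_one hp, pmul_one hp]
    simp
  | succ k ih =>
    obtain ⟨Q, hQc, hQ⟩ := ih
    refine ⟨fun y h => ((k + 1 : ℕ) : ℝ) • ppow a₁ a₂ a₃ b₁ b₂ b₃ y k
      + pmul a₁ a₂ a₃ b₁ b₂ b₃ y (Q y h) + pmul a₁ a₂ a₃ b₁ b₂ b₃ h (Q y h), ?_, ?_⟩
    · apply Continuous.add
      apply Continuous.add
      · exact ((ppow_cont a₁ a₂ a₃ b₁ b₂ b₃ k).comp continuous_fst).const_smul ((k + 1 : ℕ) : ℝ)
      · exact (pmul_cont a₁ a₂ a₃ b₁ b₂ b₃).comp (continuous_fst.prodMk hQc)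
      · exact (pmul_cont a₁ a₂ a₃ b₁ b₂ b₃).comp (continuous_snd.prodMk hQc)
    · intro y h
      have e1 : ppow a₁ a₂ a₃ b₁ b₂ b₃ (y + h) (k + 1 + 1)
          = pmul a₁ a₂ a₃ b₁ b₂ b₃ (y + h) (ppow a₁ a₂ a₃ b₁ b₂ b₃ (y + h) (k + 1)) := rfl
      have e2 : ppow a₁ a₂ a₃ b₁ b₂ b₃ y (k + 1 + 1)
          = pmul a₁ a₂ a₃ b₁ b₂ b₃ y (ppow a₁ a₂ a₃ b₁ b₂ b₃ y (k + 1)) := rfl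
      have e3 : ppow a₁ a₂ a₃ b₁ b₂ b₃ y (k + 1)
          = pmul a₁ a₂ a₃ b₁ b₂ b₃ y (ppow a₁ a₂ a₃ b₁ b₂ b₃ y k) := rfl
      set P := ppow a₁ a₂ a₃ b₁ b₂ b₃ y (k + 1) with hP
      set p := ppow a₁ a₂ a₃ b₁ b₂ b₃ y k with hp'
      set q := Q y h with hq
      rw [e1, hQ y h, e2, pmul_add_left, pmul_add, pmul_add, pmul_add, pmul_add,
        pmul_smul, pmul_smul]
      rw [show pmul a₁ a₂ a₃ b₁ b₂ b₃ y (pmul a₁ a₂ a₃ b₁ b₂ b₃ h p)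
          = pmul a₁ a₂ a₃ b₁ b₂ b₃ h P from by rw [pmul_left_comm hp, ← e3]]
      rw [show pmul a₁ a₂ a₃ b₁ b₂ b₃ y
            (pmul a₁ a₂ a₃ b₁ b₂ b₃ (pmul a₁ a₂ a₃ b₁ b₂ b₃ h h) q)
          = pmul a₁ a₂ a₃ b₁ b₂ b₃ (pmul a₁ a₂ a₃ b₁ b₂ b₃ h h)
            (pmul a₁ a₂ a₃ b₁ b₂ b₃ y q) from pmul_left_comm hp _ _ _]
      rw [show pmul a₁ a₂ a₃ b₁ b₂ b₃ h (pmul a₁ a₂ a₃ b₁ b₂ b₃ h p)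
          = pmul a₁ a₂ a₃ b₁ b₂ b₃ (pmul a₁ a₂ a₃ b₁ b₂ b₃ h h) p from (passoc hp _ _ _).symm]
      rw [show pmul a₁ a₂ a₃ b₁ b₂ b₃ h
            (pmul a₁ a₂ a₃ b₁ b₂ b₃ (pmul a₁ a₂ a₃ b₁ b₂ b₃ h h) q)
          = pmul a₁ a₂ a₃ b₁ b₂ b₃ (pmul a₁ a₂ a₃ b₁ b₂ b₃ h h)
            (pmul a₁ a₂ a₃ b₁ b₂ b₃ h q) from pmul_left_comm hp _ _ _]
      rw [pmul_add, pmul_add, pmul_smul]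
      push_cast
      module

end PerplexAux

theorem polynomial_pdiff (a₁ a₂ a₃ b₁ b₂ b₃ : ℝ)
    (hp : IsPerplexParam a₁ a₂ a₃ b₁ b₂ b₃)
    (n : ℕ) (hn : 1 ≤ n) (c : ℕ → ℝ × ℝ) (hc : c n ≠ 0)
    (f : ℝ × ℝ → ℝ × ℝ)
    (hf : ∀ x : ℝ × ℝ, f x = ∑ k ∈ Finset.range (n + 1), pmul a₁ a₂ a₃ b₁ b₂ b₃ (c k) (ppow a₁ a₂ a₃ b₁ b₂ b₃ x k)) :
    ∀ x : ℝ × ℝ,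
      PDiffAt a₁ a₂ a₃ b₁ b₂ b₃ f
        (∑ k ∈ Finset.range n, ((k + 1 : ℕ) : ℝ) • pmul a₁ a₂ a₃ b₁ b₂ b₃ (c (k + 1)) (ppow a₁ a₂ a₃ b₁ b₂ b₃ x k))
        x := by
  intro x
  choose Q hQc hQ using fun k => ppow_expand hp k
  set D : (ℝ × ℝ) → ℝ × ℝ := fun y =>
    ∑ k ∈ Finset.range n,
      ((k + 1 : ℕ) : ℝ) • pmul a₁ a₂ a₃ b₁ b₂ b₃ (c (k + 1)) (ppow a₁ a₂ a₃ b₁ b₂ b₃ y k)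
    with hD
  set S : (ℝ × ℝ) → (ℝ × ℝ) → ℝ × ℝ := fun z w =>
    ∑ i ∈ Finset.range n, pmul a₁ a₂ a₃ b₁ b₂ b₃ (c (i + 1)) (Q i z w) with hS
  have hdiff : ∀ z w : ℝ × ℝ,
      f (z + w) - f z
        = pmul a₁ a₂ a₃ b₁ b₂ b₃ w (D z)
          + pmul a₁ a₂ a₃ b₁ b₂ b₃ (pmul a₁ a₂ a₃ b₁ b₂ b₃ w w) (S z w) := by
    intro z w
    rw [hf (z + w), hf z, ← Finset.sum_sub_distrib, Finset.sum_range_succ']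
    have h0 : pmul a₁ a₂ a₃ b₁ b₂ b₃ (c 0) (ppow a₁ a₂ a₃ b₁ b₂ b₃ (z + w) 0)
        - pmul a₁ a₂ a₃ b₁ b₂ b₃ (c 0) (ppow a₁ a₂ a₃ b₁ b₂ b₃ z 0) = 0 := sub_self _
    rw [h0, add_zero]
    calc
      ∑ i ∈ Finset.range n,
          (pmul a₁ a₂ a₃ b₁ b₂ b₃ (c (i + 1)) (ppow a₁ a₂ a₃ b₁ b₂ b₃ (z + w) (i + 1))
            - pmul a₁ a₂ a₃ b₁ b₂ b₃ (c (i + 1)) (ppow a₁ a₂ a₃ b₁ b₂ b₃ z (i + 1)))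
          = ∑ i ∈ Finset.range n,
              (((i + 1 : ℕ) : ℝ) • pmul a₁ a₂ a₃ b₁ b₂ b₃ w
                  (pmul a₁ a₂ a₃ b₁ b₂ b₃ (c (i + 1)) (ppow a₁ a₂ a₃ b₁ b₂ b₃ z i))
                + pmul a₁ a₂ a₃ b₁ b₂ b₃ (pmul a₁ a₂ a₃ b₁ b₂ b₃ w w)
                  (pmul a₁ a₂ a₃ b₁ b₂ b₃ (c (i + 1)) (Q i z w))) := by
        refine Finset.sum_congr rfl fun i _ => ?_
        rw [hQ i z w, pmul_add, pmul_add, pmul_smul,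
          pmul_left_comm hp (c (i + 1)) w (ppow a₁ a₂ a₃ b₁ b₂ b₃ z i),
          pmul_left_comm hp (c (i + 1)) (pmul a₁ a₂ a₃ b₁ b₂ b₃ w w) (Q i z w)]
        module
      _ = pmul a₁ a₂ a₃ b₁ b₂ b₃ w (D z)
            + pmul a₁ a₂ a₃ b₁ b₂ b₃ (pmul a₁ a₂ a₃ b₁ b₂ b₃ w w) (S z w) := by
        rw [Finset.sum_add_distrib]
        simp only [hD, hS]
        rw [pmul_sum, pmul_sum]
        congr 1
        refine Finset.sum_congr rfl fun i _ => ?_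
        rw [pmul_smul]
  refine ⟨Set.univ, Filter.univ_mem, D, by rw [hD], ?_, ?_⟩
  · rw [hD]
    apply Continuous.continuousOn
    apply continuous_finset_sum
    intro k _
    exact (((pmul_cont a₁ a₂ a₃ b₁ b₂ b₃).comp
      (continuous_const.prodMk (ppow_cont a₁ a₂ a₃ b₁ b₂ b₃ k)))).const_smul ((k + 1 : ℕ) : ℝ)
  · intro y _ h hps
    obtain ⟨hinv, hlim, -⟩ := hps
    have key : ∀ m : ℕ,
        pmul a₁ a₂ a₃ b₁ b₂ b₃ (f (y + h m) - f y) (pinv a₁ a₂ a₃ b₁ b₂ b₃ (h m))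
          = D y + pmul a₁ a₂ a₃ b₁ b₂ b₃ (h m) (S y (h m)) := by
      intro m
      have hio := pinv_spec hp (hinv m)
      rw [hdiff y (h m), pmul_add_left]
      congr 1
      · rw [pmul_right_comm hp (h m) (D y) (pinv a₁ a₂ a₃ b₁ b₂ b₃ (h m)), hio,
          one_pmul hp]
      · rw [pmul_right_comm hp (pmul a₁ a₂ a₃ b₁ b₂ b₃ (h m) (h m)) (S y (h m))
            (pinv a₁ a₂ a₃ b₁ b₂ b₃ (h m)),
          passoc hp (h m) (h m) (pinv a₁ a₂ a₃ b₁ b₂ b₃ (h m)), hio, pmul_one hp]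
    have hScont : Continuous fun t : ℝ × ℝ => S y t := by
      simp only [hS]
      apply continuous_finset_sum
      intro i _
      exact (pmul_cont a₁ a₂ a₃ b₁ b₂ b₃).comp (continuous_const.prodMk
        ((hQc i).comp (continuous_const.prodMk continuous_id)))
    have hcont : Continuous fun t : ℝ × ℝ =>
        D y + pmul a₁ a₂ a₃ b₁ b₂ b₃ t (S y t) :=
      continuous_const.add ((pmul_cont a₁ a₂ a₃ b₁ b₂ b₃).comp
        (continuous_id.prodMk hScont))
    have hten : Tendsto (fun m => D y + pmul a₁ a₂ a₃ b₁ b₂ b₃ (h m) (S y (h m)))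
        atTop (nhds (D y)) := by
      have h0 : D y + pmul a₁ a₂ a₃ b₁ b₂ b₃ (0 : ℝ × ℝ) (S y 0) = D y := by
        rw [zero_pmul, add_zero]
      have ht := (hcont.tendsto 0).comp hlim
      rw [h0] at ht
      exact ht
    exact hten.congr fun m => (key m).symm
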